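/- Let 0 ≤ k ≤ n. If A and B are complex matrices whose rows and columns are indexed by S_{k,n} and which are both invariant under the diagonal action of G = S_k × S_n (that is, A_{g·σ, g·τ} = A_{σ,τ} for all g ∈ G and all σ, τ ∈ S_{k,n}, and likewise for B), then AB = BA. (This is the commutativity underlying the fact that (S_k × S_n, diag(S_k) × S_{n−k}) is a Gelfand pair.) -/

import Mathlib

open scoped Classical

/-- The action of `S_k × S_n` on the set `S_{k,n}` of injections `[k] ↪ [n]`:
`(π, ρ) · σ = ρ ∘ σ ∘ π⁻¹`. -/
def injAct {k n : ℕ} (π : Equiv.Perm (Fin k)) (ρ : Equiv.Perm (Fin n))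
    (σ : Fin k ↪ Fin n) : Fin k ↪ Fin n :=
  (π.symm.toEmbedding.trans σ).trans ρ.toEmbedding

section PIC
variable {α : Type*} [Fintype α] [DecidableEq α]

noncomputable def pdom (p : α → Option α) : Finset α :=
  Finset.univ.filter (fun x => (p x).isSome)

theorem pic (p : α → Option α)
    (hinj : ∀ x y z, p x = some z → p y = some z → x = y) :
    ∃ π : Equiv.Perm α,
      (∀ x y, p x = some y → p (π y) = some (π x)) ∧
      (∀ x, p x = none → (∀ y, p y ≠ some x) → π x = x) := by
  generalize hN : (pdom p).card = N
  induction N using Nat.strong_induction_on generalizing p with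
  | _ N IH =>
  by_cases hstart : ∃ x₀, (p x₀).isSome ∧ ∀ y, p y ≠ some x₀
  ·
    obtain ⟨x₀, hx₀s, hx₀r⟩ := hstart
    set q : α → α := fun x => (p x).getD x with hq
    have hqs : ∀ x, (p x).isSome → p x = some (q x) := by
      intro x hx
      obtain ⟨a, ha⟩ := Option.isSome_iff_exists.mp hx
      simp [hq, ha]
    set xi : ℕ → α := fun i => q^[i] x₀ with hxi
    have hxi0 : xi 0 = x₀ := rfl
    have hxisucc : ∀ i, xi (i+1) = q (xi i) := by
      intro i
      simp [hxi, Function.iterate_succ_apply']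
    have hedge0 : ∀ i, (p (xi i)).isSome → p (xi i) = some (xi (i+1)) := by
      intro i hi
      rw [hxisucc i]
      exact hqs _ hi
    -- the path must stop somewhere
    have hex : ∃ j, ¬ (p (xi j)).isSome := by
      by_contra hall
      push_neg at hall
      have hedgeall : ∀ i, p (xi i) = some (xi (i+1)) := fun i => hedge0 i (by simpa using hall i)
      have hne : ∀ i j, i < j → xi i ≠ xi j := by
        intro i
        induction i with
        | zero =>
          intro j h1 heq
          obtain ⟨j', rfl⟩ : ∃ j', j = j'+1 := ⟨j-1, by omega⟩
          apply hx₀r (xi j')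
          rw [hedgeall j', ← heq, hxi0]
        | succ i ih =>
          intro j h1 heq
          obtain ⟨j', rfl⟩ : ∃ j', j = j'+1 := ⟨j-1, by omega⟩
          have : xi i = xi j' := hinj _ _ _ (hedgeall i) (by rw [hedgeall j', heq])
          exact ih j' (by omega) this
      obtain ⟨a, b, hab, heq⟩ := Finite.exists_ne_map_eq_of_infinite xi
      rcases Nat.lt_or_ge a b with h | h
      · exact hne a b h heq
      · exact hne b a (by omega) heq.symm
    set m := Nat.find hex with hm
    have hmnone : ¬ (p (xi m)).isSome := Nat.find_spec hex
    have hdef : ∀ i, i < m → (p (xi i)).isSome := by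
      intro i hi
      exact not_not.mp (Nat.find_min hex hi)
    have hm0 : 0 < m := by
      rcases Nat.eq_zero_or_pos m with h | h
      · exfalso; apply hmnone; rw [h, hxi0]; exact hx₀s
      · exact h
    have hedge : ∀ i, i < m → p (xi i) = some (xi (i+1)) := fun i hi => hedge0 i (hdef i hi)
    -- distinctness of path points
    have hne : ∀ i j, i < j → j ≤ m → xi i ≠ xi j := by
      intro i
      induction i with
      | zero =>
        intro j h1 h2 heq
        obtain ⟨j', rfl⟩ : ∃ j', j = j'+1 := ⟨j-1, by omega⟩
        apply hx₀r (xi j')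
        rw [hedge j' (by omega), ← heq, hxi0]
      | succ i ih =>
        intro j h1 h2 heq
        obtain ⟨j', rfl⟩ : ∃ j', j = j'+1 := ⟨j-1, by omega⟩
        have : xi i = xi j' := hinj _ _ _ (hedge i (by omega)) (by rw [hedge j' (by omega), heq])
        exact ih j' (by omega) (by omega) this
    have hdist : ∀ i j, i ≤ m → j ≤ m → xi i = xi j → i = j := by
      intro i j hi hj heq
      rcases Nat.lt_trichotomy i j with h | h | h
      · exact absurd heq (hne i j h hj)
      · exact h
      · exact absurd heq.symm (hne j i h hi)
    -- the truncated partial injection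
    set p' : α → Option α := fun x => if ∃ i, i < m ∧ xi i = x then none else p x with hp'
    have hp'sub : ∀ x y, p' x = some y → p x = some y := by
      intro x y hxy
      by_cases h : ∃ i, i < m ∧ xi i = x
      · simp [hp', h] at hxy
      · simpa [hp', h] using hxy
    have hinj' : ∀ x y z, p' x = some z → p' y = some z → x = y :=
      fun x y z hx hy => hinj x y z (hp'sub _ _ hx) (hp'sub _ _ hy)
    -- the path points are outside dom p' and ran p'
    have hp'none : ∀ i, i ≤ m → p' (xi i) = none := by
      intro i hi
      rcases Nat.lt_or_ge i m with h | h
      · have hc : ∃ j, j < m ∧ xi j = xi i := ⟨i, h, rfl⟩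
        simp [hp', hc]
      · have him : i = m := by omega
        by_cases hc : ∃ j, j < m ∧ xi j = xi i
        · simp [hp', hc]
        · simp only [hp', hc, if_false]
          rw [him]
          exact Option.not_isSome_iff_eq_none.mp hmnone
    have hp'ran : ∀ i, i ≤ m → ∀ y, p' y ≠ some (xi i) := by
      intro i hi y hy
      have hpy : p y = some (xi i) := hp'sub _ _ hy
      have hyout : ¬ ∃ j, j < m ∧ xi j = y := by
        intro hc
        simp [hp', hc] at hy
      rcases Nat.eq_zero_or_pos i with h0 | h0
      · subst h0; rw [hxi0] at hpy; exact hx₀r y hpy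
      · obtain ⟨i', rfl⟩ : ∃ i', i = i'+1 := ⟨i-1, by omega⟩
        have : y = xi i' := hinj _ _ _ hpy (hedge i' (by omega))
        exact hyout ⟨i', by omega, this.symm⟩
    -- cardinality decreases
    have hsub : pdom p' ⊆ pdom p := by
      intro x hx
      simp only [pdom, Finset.mem_filter, Finset.mem_univ, true_and] at hx ⊢
      obtain ⟨a, ha⟩ := Option.isSome_iff_exists.mp hx
      rw [hp'sub _ _ ha]
      rfl
    have hssub : pdom p' ⊂ pdom p := by
      refine Finset.ssubset_iff_of_subset hsub |>.mpr ⟨x₀, ?_, ?_⟩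
      · simp only [pdom, Finset.mem_filter, Finset.mem_univ, true_and]; exact hx₀s
      · simp only [pdom, Finset.mem_filter, Finset.mem_univ, true_and]
        rw [← hxi0, hp'none 0 (by omega)]
        simp
    obtain ⟨π', hπ'edge, hπ'fix⟩ :=
      IH (pdom p').card (by rw [← hN]; exact Finset.card_lt_card hssub) p' hinj' rfl
    have hπ'P : ∀ i, i ≤ m → π' (xi i) = xi i := by
      intro i hi
      exact hπ'fix (xi i) (hp'none i hi) (hp'ran i hi)
    -- the reversal of the path
    set r : α → α := fun x => if h : ∃ i, i ≤ m ∧ xi i = x then xi (m - Classical.choose h) else x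
      with hr
    have hrP : ∀ i, i ≤ m → r (xi i) = xi (m - i) := by
      intro i hi
      have h : ∃ j, j ≤ m ∧ xi j = xi i := ⟨i, hi, rfl⟩
      have hspec := Classical.choose_spec h
      have : Classical.choose h = i := hdist _ _ hspec.1 hi hspec.2
      simp only [hr, dif_pos h, this]
    have hrout : ∀ x, (¬ ∃ i, i ≤ m ∧ xi i = x) → r x = x := by
      intro x hx
      simp only [hr, dif_neg hx]
    have hrinv : Function.Involutive r := by
      intro x
      by_cases h : ∃ i, i ≤ m ∧ xi i = x
      · obtain ⟨i, hi, rfl⟩ := h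
        rw [hrP i hi, hrP (m - i) (by omega), Nat.sub_sub_self hi]
      · rw [hrout x h, hrout x h]
    set rev : Equiv.Perm α := hrinv.toPerm with hrev
    have hrevapp : ∀ x, rev x = r x := fun x => rfl
    refine ⟨rev.trans π', ?_, ?_⟩
    · intro x y hxy
      have happ : ∀ z, (rev.trans π') z = π' (r z) := fun z => rfl
      by_cases hx : ∃ i, i < m ∧ xi i = x
      · obtain ⟨i, him, rfl⟩ := hx
        have hy : y = xi (i+1) := by
          have := hedge i him
          rw [hxy] at this
          exact Option.some_injective _ this
        subst hy
        rw [happ, happ, hrP (i+1) (by omega), hrP i (by omega),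
          hπ'P (m - (i+1)) (by omega), hπ'P (m - i) (by omega)]
        have h1 : m - (i+1) < m := by omega
        have h2 : m - (i+1) + 1 = m - i := by omega
        rw [hedge (m - (i+1)) h1, h2]
      · -- x not on the path
        have hxm : ¬ ∃ i, i ≤ m ∧ xi i = x := by
          rintro ⟨i, hi, rfl⟩
          rcases Nat.lt_or_ge i m with h | h
          · exact hx ⟨i, h, rfl⟩
          · have : i = m := by omega
            subst this
            apply hmnone
            simp [hxy]
        have hp'x : p' x = some y := by simp only [hp', if_neg hx]; exact hxy
        have hym : ¬ ∃ i, i ≤ m ∧ xi i = y := by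
          rintro ⟨i, hi, rfl⟩
          exact hp'ran i hi x hp'x
        have happx : (rev.trans π') x = π' x := by
          show π' (r x) = π' x
          rw [hrout x hxm]
        have happy : (rev.trans π') y = π' y := by
          show π' (r y) = π' y
          rw [hrout y hym]
        rw [happx, happy]
        exact hp'sub _ _ (hπ'edge x y hp'x)
    · intro x hxnone hxran
      have hxm : ¬ ∃ i, i ≤ m ∧ xi i = x := by
        rintro ⟨i, hi, rfl⟩
        rcases Nat.lt_or_ge i m with h | h
        · apply Option.not_isSome_iff_eq_none.mpr hxnone
          exact hdef i h
        · have : i = m := by omega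
          subst this
          obtain ⟨i', hi'⟩ : ∃ i', i' + 1 = m := ⟨m - 1, by omega⟩
          exact hxran (xi i') (by rw [hedge i' (by omega), hi'])
      show π' (r x) = x
      rw [hrout x hxm]
      apply hπ'fix
      · by_cases h : ∃ i, i < m ∧ xi i = x
        · simp [hp', h]
        · simp only [hp', if_neg h]; exact hxnone
      · intro y hy
        exact hxran y (hp'sub _ _ hy)
  · -- base case : p is a permutation of its domain
    push_neg at hstart
    set q : α → α := fun x => (p x).getD x with hq
    have hqs : ∀ x, (p x).isSome → p x = some (q x) := by
      intro x hx
      obtain ⟨a, ha⟩ := Option.isSome_iff_exists.mp hx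
      simp [hq, ha]
    have hqn : ∀ x, p x = none → q x = x := by intro x hx; simp [hq, hx]
    -- range = domain
    have hrng : ∀ y, (∃ x, p x = some y) → (p y).isSome := by
      intro y hy
      set rng : Finset α := Finset.univ.filter (fun y => ∃ x, p x = some y) with hrngdef
      have hsub : pdom p ⊆ rng := by
        intro x hx
        simp only [pdom, Finset.mem_filter, Finset.mem_univ, true_and] at hx
        simp only [hrngdef, Finset.mem_filter, Finset.mem_univ, true_and]
        exact hstart x hx
      have himg : rng ⊆ (pdom p).image q := by
        intro y hy
        simp only [hrngdef, Finset.mem_filter, Finset.mem_univ, true_and] at hy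
        obtain ⟨x, hx⟩ := hy
        refine Finset.mem_image.mpr ⟨x, ?_, ?_⟩
        · simp [pdom, hx]
        · simp [hq, hx]
      have hcard : rng.card ≤ (pdom p).card :=
        le_trans (Finset.card_le_card himg) (Finset.card_image_le)
      have : rng = pdom p := (Finset.eq_of_subset_of_card_le hsub hcard).symm
      have hyr : y ∈ rng := by
        simp only [hrngdef, Finset.mem_filter, Finset.mem_univ, true_and]; exact hy
      rw [this] at hyr
      simpa [pdom] using hyr
    have hqinj : Function.Injective q := by
      intro x y hxy
      rcases hx : p x with _ | a <;> rcases hy2 : p y with _ | b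
      · rw [hqn x hx, hqn y hy2] at hxy; exact hxy
      · exfalso
        rw [hqn x hx] at hxy
        have : q y = b := by simp [hq, hy2]
        rw [this] at hxy
        have := hrng b ⟨y, hy2⟩
        rw [hxy] at hx
        simp [hx] at this
      · exfalso
        rw [hqn y hy2] at hxy
        have : q x = a := by simp [hq, hx]
        rw [this] at hxy
        have := hrng a ⟨x, hx⟩
        rw [← hxy] at hy2
        simp [hy2] at this
      · have hqa : q x = a := by simp [hq, hx]
        have hqb : q y = b := by simp [hq, hy2]
        rw [hqa, hqb] at hxy
        subst hxy
        exact hinj x y a hx hy2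
    set f : Equiv.Perm α := Equiv.ofBijective q (Finite.injective_iff_bijective.mp hqinj) with hf
    have hfq : ∀ x, f x = q x := fun x => rfl
    have hsupp : ∀ x, x ∈ f.support → (p x).isSome := by
      intro x hx
      by_contra h
      have : p x = none := Option.not_isSome_iff_eq_none.mp h
      have : f x = x := by rw [hfq, hqn x this]
      exact (Equiv.Perm.mem_support.mp hx) this
    -- conjugate f to f⁻¹
    have hconj : IsConj f f⁻¹ := by
      rw [Equiv.Perm.isConj_iff_cycleType_eq, Equiv.Perm.cycleType_inv]
    obtain ⟨c, hc⟩ := isConj_iff.mp hconj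
    have hcsemi : ∀ x, c (f x) = f⁻¹ (c x) := by
      intro x
      have : c * f = f⁻¹ * c := by
        rw [← hc]; group
      calc c (f x) = (c * f) x := rfl
        _ = (f⁻¹ * c) x := by rw [this]
        _ = f⁻¹ (c x) := rfl
    have hcsupp : ∀ x, x ∈ f.support ↔ c x ∈ f.support := by
      intro x
      have h1 : (c * f * c⁻¹).support = f.support.map ⟨c, c.injective⟩ :=
        Equiv.Perm.support_conj
      rw [hc, Equiv.Perm.support_inv] at h1
      constructor
      · intro hx
        rw [h1]
        exact Finset.mem_map.mpr ⟨x, hx, rfl⟩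
      · intro hx
        rw [h1] at hx
        obtain ⟨y, hy, hyx⟩ := Finset.mem_map.mp hx
        have : y = x := c.injective hyx
        rwa [← this]
    set π : Equiv.Perm α :=
      Equiv.Perm.ofSubtype (c.subtypePerm (fun x => (hcsupp x).symm)) with hπ
    have hπmem : ∀ x (hx : x ∈ f.support), π x = c x := by
      intro x hx
      rw [hπ, Equiv.Perm.ofSubtype_apply_of_mem (c.subtypePerm (fun x => (hcsupp x).symm)) hx]
      rfl
    have hπnot : ∀ x, x ∉ f.support → π x = x := by
      intro x hx
      rw [hπ, Equiv.Perm.ofSubtype_apply_of_not_mem (c.subtypePerm (fun x => (hcsupp x).symm)) hx]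
    have hπsemi : ∀ x, π (f x) = f⁻¹ (π x) := by
      intro x
      by_cases hx : x ∈ f.support
      · have hfx : f x ∈ f.support := Equiv.Perm.apply_mem_support.mpr hx
        rw [hπmem _ hfx, hπmem _ hx, hcsemi]
      · have hfx : f x = x := Equiv.Perm.notMem_support.mp hx
        rw [hfx, hπnot x hx]
        have : x ∉ f⁻¹.support := by rwa [Equiv.Perm.support_inv]
        exact (Equiv.Perm.notMem_support.mp this).symm
    have hπsemi' : ∀ z, f (π z) = π (f⁻¹ z) := by
      intro z
      have := hπsemi (f⁻¹ z)
      rw [Equiv.Perm.coe_inv, Equiv.apply_symm_apply] at this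
      rw [this, Equiv.Perm.coe_inv, Equiv.apply_symm_apply]
    have hπdom : ∀ x, (p x).isSome → (p (π x)).isSome := by
      intro x hx
      by_cases hxs : x ∈ f.support
      · have : π x ∈ f.support := by rw [hπmem _ hxs]; exact (hcsupp x).mp hxs
        exact hsupp _ this
      · rw [hπnot x hxs]; exact hx
    refine ⟨π, ?_, ?_⟩
    · intro x y hxy
      have hxs : (p x).isSome := by simp [hxy]
      have hys : (p y).isSome := hrng y ⟨x, hxy⟩
      have hfx : f x = y := by
        rw [hfq]
        have := hqs x hxs
        rw [hxy] at this
        exact (Option.some_injective _ this.symm)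
      have hπy : (p (π y)).isSome := hπdom y hys
      have : p (π y) = some (q (π y)) := hqs _ hπy
      rw [this]
      congr 1
      rw [← hfq, hπsemi' y, ← hfx, Equiv.Perm.coe_inv, Equiv.symm_apply_apply]
    · intro x hx _
      apply hπnot
      by_contra h
      have := hsupp x h
      simp [hx] at this
end PIC

theorem injAct_apply {k n : ℕ} (π : Equiv.Perm (Fin k)) (ρ : Equiv.Perm (Fin n))
    (σ : Fin k ↪ Fin n) (i : Fin k) : injAct π ρ σ i = ρ (σ (π.symm i)) := rfl

/-- any pair of injections can be swapped by a group element -/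
theorem swap_orbit {k n : ℕ} (σ τ : Fin k ↪ Fin n) :
    ∃ (π : Equiv.Perm (Fin k)) (ρ : Equiv.Perm (Fin n)),
      injAct π ρ σ = τ ∧ injAct π ρ τ = σ := by
  set p : Fin n → Option (Fin n) :=
    fun x => if h : ∃ i, σ i = x then some (τ (Classical.choose h)) else none with hp
  have hpkey : ∀ i, p (σ i) = some (τ i) := by
    intro i
    have h : ∃ j, σ j = σ i := ⟨i, rfl⟩
    have hspec := Classical.choose_spec h
    have : Classical.choose h = i := σ.injective hspec
    simp only [hp, dif_pos h, this]
  have hpchar : ∀ x z, p x = some z → ∃ i, σ i = x ∧ τ i = z := by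
    intro x z hxz
    by_cases h : ∃ i, σ i = x
    · refine ⟨Classical.choose h, Classical.choose_spec h, ?_⟩
      simp only [hp, dif_pos h] at hxz
      exact Option.some_injective _ hxz
    · simp [hp, h] at hxz
  have hinj : ∀ x y z, p x = some z → p y = some z → x = y := by
    intro x y z hx hy
    obtain ⟨i, hix, hiz⟩ := hpchar x z hx
    obtain ⟨j, hjy, hjz⟩ := hpchar y z hy
    have : i = j := τ.injective (hiz.trans hjz.symm)
    rw [← hix, ← hjy, this]
  obtain ⟨ρ, hρ, -⟩ := pic p hinj
  have hfun : ∀ i, ∃ j, σ j = ρ (τ i) ∧ τ j = ρ (σ i) := by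
    intro i
    exact hpchar _ _ (hρ (σ i) (τ i) (hpkey i))
  set π₀ : Fin k → Fin k := fun i => Classical.choose (hfun i) with hπ₀
  have hπ₀σ : ∀ i, σ (π₀ i) = ρ (τ i) := fun i => (Classical.choose_spec (hfun i)).1
  have hπ₀τ : ∀ i, τ (π₀ i) = ρ (σ i) := fun i => (Classical.choose_spec (hfun i)).2
  have hπ₀inj : Function.Injective π₀ := by
    intro i j hij
    have : σ (π₀ i) = σ (π₀ j) := by rw [hij]
    rw [hπ₀σ, hπ₀σ] at this
    exact τ.injective (ρ.injective this)
  set π : Equiv.Perm (Fin k) := Equiv.ofBijective π₀ (Finite.injective_iff_bijective.mp hπ₀inj)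
    with hπ
  have hπapp : ∀ i, π i = π₀ i := fun i => rfl
  refine ⟨π, ρ, ?_, ?_⟩
  · ext i
    rw [injAct_apply]
    have := hπ₀τ (π.symm i)
    rw [← hπapp, Equiv.apply_symm_apply] at this
    exact congrArg Fin.val this.symm
  · ext i
    rw [injAct_apply]
    have := hπ₀σ (π.symm i)
    rw [← hπapp, Equiv.apply_symm_apply] at this
    exact congrArg Fin.val this.symm

/-- If `A` and `B` are complex matrices indexed by injections `[k] ↪ [n]`, both invariant
under the diagonal action of `G = S_k × S_n`, then `AB = BA`. -/
theorem stmt_0 (k n : ℕ) (hkn : k ≤ n)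
    (A B : Matrix (Fin k ↪ Fin n) (Fin k ↪ Fin n) ℂ)
    (hA : ∀ (π : Equiv.Perm (Fin k)) (ρ : Equiv.Perm (Fin n)) (σ τ : Fin k ↪ Fin n),
      A (injAct π ρ σ) (injAct π ρ τ) = A σ τ)
    (hB : ∀ (π : Equiv.Perm (Fin k)) (ρ : Equiv.Perm (Fin n)) (σ τ : Fin k ↪ Fin n),
      B (injAct π ρ σ) (injAct π ρ τ) = B σ τ) :
    A * B = B * A := by
  -- the action as an equiv
  have hact : ∀ (π : Equiv.Perm (Fin k)) (ρ : Equiv.Perm (Fin n)),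
      ∃ e : (Fin k ↪ Fin n) ≃ (Fin k ↪ Fin n), ∀ σ, e σ = injAct π ρ σ := by
    intro π ρ
    refine ⟨⟨injAct π ρ, injAct π⁻¹ ρ⁻¹, ?_, ?_⟩, fun σ => rfl⟩ <;>
      · intro σ
        ext i
        simp [injAct, Equiv.Perm.inv_def]
  -- symmetry of invariant matrices
  have hsymm : ∀ (M : Matrix (Fin k ↪ Fin n) (Fin k ↪ Fin n) ℂ),
      (∀ (π : Equiv.Perm (Fin k)) (ρ : Equiv.Perm (Fin n)) (σ τ : Fin k ↪ Fin n),
        M (injAct π ρ σ) (injAct π ρ τ) = M σ τ) →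
      ∀ σ τ, M σ τ = M τ σ := by
    intro M hM σ τ
    obtain ⟨π, ρ, h1, h2⟩ := swap_orbit σ τ
    calc M σ τ = M (injAct π ρ τ) (injAct π ρ σ) := by rw [h1, h2]
      _ = M τ σ := hM π ρ τ σ
  -- invariance of the product
  have hABinv : ∀ (π : Equiv.Perm (Fin k)) (ρ : Equiv.Perm (Fin n)) (σ τ : Fin k ↪ Fin n),
      (A * B) (injAct π ρ σ) (injAct π ρ τ) = (A * B) σ τ := by
    intro π ρ σ τ
    obtain ⟨e, he⟩ := hact π ρ
    rw [Matrix.mul_apply, Matrix.mul_apply]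
    refine (Fintype.sum_equiv e (fun υ => A σ υ * B υ τ)
      (fun υ => A (injAct π ρ σ) υ * B υ (injAct π ρ τ)) ?_).symm
    intro υ
    rw [he υ, hA, hB]
  ext σ τ
  rw [show (A * B) σ τ = (A * B) τ σ from hsymm _ hABinv σ τ,
    Matrix.mul_apply, Matrix.mul_apply]
  apply Finset.sum_congr rfl
  intro υ _
  rw [hsymm A hA τ υ, hsymm B hB υ σ, mul_comm]
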